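/- The algebra B = B_q(s,t,ϕ) admits a ℤ-grading {B_n} in which C_s, C_t, K^{±1} are homogeneous of degree 0, F is homogeneous of degree 1, and E is homogeneous of degree −1; moreover B_0 has basis {K^h C_s^i C_t^j : h ∈ ℤ, i,j ∈ ℕ}, B_n (n ≥ 1) has basis {F^n K^h C_s^i C_t^j}, and B_{−n} (n ≥ 1) has basis {E^n K^h C_s^i C_t^j}. -/

import Mathlib

open LaurentPolynomial

noncomputable section

/-- The Laurent polynomial `ψ(c·λ)`. -/
noncomputable def lscale {F : Type*} [Field F] (c : F) (ψ : LaurentPolynomial F) :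
    LaurentPolynomial F :=
  Finsupp.sum ψ.coeff fun i a => (a * c ^ i) • (T i : LaurentPolynomial F)

/-- The map `ψ ↦ ψ_{s,t}` of Definition 2.4:
`ψ_{s,t}(λ) = ψ(q⁻¹λ) − (q^{−2s}+q^{−2t})ψ(qλ) + q^{−2s−2t}ψ(q³λ)`. -/
noncomputable def adu {F : Type*} [Field F] (q : F) (s t : ℤ) (ψ : LaurentPolynomial F) :
    LaurentPolynomial F :=
  lscale q⁻¹ ψ - (q ^ (-2*s) + q ^ (-2*t)) • lscale q ψ + q ^ (-2*s-2*t) • lscale (q^3) ψ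

/-- `F[λ,λ⁻¹]_{s,t}`: the span of the monomials `λ^i`, `i ∉ {s,t}`. -/
noncomputable def lstSpan (F : Type*) [Field F] (s t : ℤ) :
    Submodule F (LaurentPolynomial F) :=
  Submodule.span F {ψ : LaurentPolynomial F | ∃ i : ℤ, i ≠ s ∧ i ≠ t ∧ ψ = T i}

/-- `x^i` for `i : ℤ`, interpreting negative powers via a designated inverse `y`. -/
def zpow2 {B : Type*} [Monoid B] (x y : B) (i : ℤ) : B :=
  if 0 ≤ i then x ^ i.toNat else y ^ (-i).toNat

/-- Evaluation `ψ(c·x)` of a Laurent polynomial `ψ`, where `y` plays the role of `x⁻¹`. -/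
noncomputable def leval {F : Type*} [Field F] {B : Type*} [Ring B] [Algebra F B]
    (ψ : LaurentPolynomial F) (c : F) (x y : B) : B :=
  Finsupp.sum ψ.coeff fun i a => (a * c ^ i) • zpow2 x y i

inductive BGen | cs | ct | e | f | k | kinv
deriving DecidableEq

open FreeAlgebra in
/-- Defining relations for `B_q(s,t,φ)`. -/
inductive BRel {F : Type*} [Field F] (q : F) (s t : ℤ) (φ : LaurentPolynomial F) :
    FreeAlgebra F BGen → FreeAlgebra F BGen → Prop
  | csCentral (x) : BRel q s t φ (ι F BGen.cs * x) (x * ι F BGen.cs)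
  | ctCentral (x) : BRel q s t φ (ι F BGen.ct * x) (x * ι F BGen.ct)
  | kkinv : BRel q s t φ (ι F BGen.k * ι F BGen.kinv) 1
  | kinvk : BRel q s t φ (ι F BGen.kinv * ι F BGen.k) 1
  | ke : BRel q s t φ (ι F BGen.k * ι F BGen.e) (q ^ 2 • (ι F BGen.e * ι F BGen.k))
  | kf : BRel q s t φ (ι F BGen.k * ι F BGen.f) ((q ^ 2)⁻¹ • (ι F BGen.f * ι F BGen.k))
  | fe : BRel q s t φ (ι F BGen.f * ι F BGen.e)
      (q ^ s • (ι F BGen.cs * zpow2 (ι F BGen.k) (ι F BGen.kinv) s)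
        + q ^ t • (ι F BGen.ct * zpow2 (ι F BGen.k) (ι F BGen.kinv) t)
        + leval φ q (ι F BGen.k) (ι F BGen.kinv))
  | ef : BRel q s t φ (ι F BGen.e * ι F BGen.f)
      (q ^ (-s) • (ι F BGen.cs * zpow2 (ι F BGen.k) (ι F BGen.kinv) s)
        + q ^ (-t) • (ι F BGen.ct * zpow2 (ι F BGen.k) (ι F BGen.kinv) t)
        + leval φ q⁻¹ (ι F BGen.k) (ι F BGen.kinv))

/-- The algebra `B_q(s,t,φ)`. -/
def BAlg {F : Type*} [Field F] (q : F) (s t : ℤ) (φ : LaurentPolynomial F) : Type _ :=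
  RingQuot (BRel q s t φ)

noncomputable instance {F : Type*} [Field F] (q : F) (s t : ℤ) (φ : LaurentPolynomial F) :
    Ring (BAlg q s t φ) := inferInstanceAs (Ring (RingQuot _))

noncomputable instance {F : Type*} [Field F] (q : F) (s t : ℤ) (φ : LaurentPolynomial F) :
    Algebra F (BAlg q s t φ) := inferInstanceAs (Algebra F (RingQuot _))

/-- The images of the generators in `B_q(s,t,φ)`. -/
noncomputable def bgen {F : Type*} [Field F] (q : F) (s t : ℤ) (φ : LaurentPolynomial F)
    (g : BGen) : BAlg q s t φ :=
  RingQuot.mkAlgHom F (BRel q s t φ) (FreeAlgebra.ι F g)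

open LaurentPolynomial Finsupp

namespace S15

variable {F : Type*} [Field F] (q : F) (s t : ℤ) (φ : LaurentPolynomial F)

abbrev Idx : Type := ℤ × ℤ × ℕ × ℕ

abbrev W (F : Type*) [Field F] : Type _ := Idx →₀ F

/-- basis vector of `W`. -/
def sgl (n h : ℤ) (i j : ℕ) : W F := Finsupp.single (n, h, i, j) 1

/-- operator defined by values on basis vectors. -/
def op (v : Idx → W F) : W F →ₗ[F] W F := Finsupp.linearCombination F v

@[simp] lemma op_single (v : Idx → W F) (p : Idx) (c : F) :
    op v (Finsupp.single p c) = c • v p := Finsupp.linearCombination_single F c p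

@[simp] lemma op_sgl (v : Idx → W F) (n h : ℤ) (i j : ℕ) :
    op v (sgl n h i j) = v (n, h, i, j) := by
  simp [sgl]

/-- "twisted θ" vector. -/
def twv (e n' h : ℤ) (i j : ℕ) : W F :=
  q ^ (s * e) • sgl n' (h + s) (i + 1) j + q ^ (t * e) • sgl n' (h + t) i (j + 1)
    + φ.coeff.sum fun a c => (c * q ^ (a * e)) • sgl n' (h + a) i j

def gop : BGen → Module.End F (W F)
  | .cs => op fun p => sgl p.1 p.2.1 (p.2.2.1 + 1) p.2.2.2
  | .ct => op fun p => sgl p.1 p.2.1 p.2.2.1 (p.2.2.2 + 1)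
  | .k => op fun p => q ^ (-2 * p.1) • sgl p.1 (p.2.1 + 1) p.2.2.1 p.2.2.2
  | .kinv => op fun p => q ^ (2 * p.1) • sgl p.1 (p.2.1 - 1) p.2.2.1 p.2.2.2
  | .f => op fun p => if 0 ≤ p.1 then sgl (p.1 + 1) p.2.1 p.2.2.1 p.2.2.2
      else twv q s t φ (-2 * p.1 - 1) (p.1 + 1) p.2.1 p.2.2.1 p.2.2.2
  | .e => op fun p => if p.1 ≤ 0 then sgl (p.1 - 1) p.2.1 p.2.2.1 p.2.2.2
      else twv q s t φ (1 - 2 * p.1) (p.1 - 1) p.2.1 p.2.2.1 p.2.2.2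

local notation "oCs" => gop (F := F) q s t φ BGen.cs
local notation "oCt" => gop (F := F) q s t φ BGen.ct
local notation "oK" => gop (F := F) q s t φ BGen.k
local notation "oKi" => gop (F := F) q s t φ BGen.kinv
local notation "oF" => gop (F := F) q s t φ BGen.f
local notation "oE" => gop (F := F) q s t φ BGen.e

lemma oCs_sgl (n h : ℤ) (i j : ℕ) : oCs (sgl n h i j) = sgl n h (i + 1) j := by
  simp [gop]

lemma oCt_sgl (n h : ℤ) (i j : ℕ) : oCt (sgl n h i j) = sgl n h i (j + 1) := by
  simp [gop]

lemma oK_sgl (n h : ℤ) (i j : ℕ) : oK (sgl n h i j) = q ^ (-2 * n) • sgl n (h + 1) i j := by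
  simp [gop]

lemma oKi_sgl (n h : ℤ) (i j : ℕ) : oKi (sgl n h i j) = q ^ (2 * n) • sgl n (h - 1) i j := by
  simp [gop]

lemma oF_sgl_nonneg {n : ℤ} (hn : 0 ≤ n) (h : ℤ) (i j : ℕ) :
    oF (sgl n h i j) = sgl (n + 1) h i j := by
  simp [gop, hn]

lemma oF_sgl_neg {n : ℤ} (hn : ¬ 0 ≤ n) (h : ℤ) (i j : ℕ) :
    oF (sgl n h i j) = twv q s t φ (-2 * n - 1) (n + 1) h i j := by
  simp [gop, hn]

lemma oE_sgl_nonpos {n : ℤ} (hn : n ≤ 0) (h : ℤ) (i j : ℕ) :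
    oE (sgl n h i j) = sgl (n - 1) h i j := by
  simp [gop, hn]

lemma oE_sgl_pos {n : ℤ} (hn : ¬ n ≤ 0) (h : ℤ) (i j : ℕ) :
    oE (sgl n h i j) = twv q s t φ (1 - 2 * n) (n - 1) h i j := by
  simp [gop, hn]

end S15
namespace S15

variable {F : Type*} [Field F] (q : F) (s t : ℤ) (φ : LaurentPolynomial F)

local notation "oCs" => gop (F := F) q s t φ BGen.cs
local notation "oCt" => gop (F := F) q s t φ BGen.ct
local notation "oK" => gop (F := F) q s t φ BGen.k
local notation "oKi" => gop (F := F) q s t φ BGen.kinv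
local notation "oF" => gop (F := F) q s t φ BGen.f
local notation "oE" => gop (F := F) q s t φ BGen.e

lemma map_twv (L : W F →ₗ[F] W F) (e n' h : ℤ) (i j : ℕ) :
    L (twv q s t φ e n' h i j) =
      q ^ (s * e) • L (sgl n' (h + s) (i + 1) j) + q ^ (t * e) • L (sgl n' (h + t) i (j + 1))
        + φ.coeff.sum fun a c => (c * q ^ (a * e)) • L (sgl n' (h + a) i j) := by
  simp [twv, map_finsuppSum]

lemma oCs_twv (e n' h : ℤ) (i j : ℕ) :
    oCs (twv q s t φ e n' h i j) = twv q s t φ e n' h (i + 1) j := by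
  rw [map_twv]
  simp only [oCs_sgl, twv]

lemma oCt_twv (e n' h : ℤ) (i j : ℕ) :
    oCt (twv q s t φ e n' h i j) = twv q s t φ e n' h i (j + 1) := by
  rw [map_twv]
  simp only [oCt_sgl, twv]

lemma oK_twv (e n' h : ℤ) (i j : ℕ) :
    oK (twv q s t φ e n' h i j) = q ^ (-2 * n') • twv q s t φ e n' (h + 1) i j := by
  rw [map_twv]
  simp only [oK_sgl, twv, smul_add, Finsupp.smul_sum, smul_smul]
  congr 2
  · rw [mul_comm, add_right_comm]
  · rw [mul_comm, add_right_comm]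
  · funext a c
    rw [mul_comm (q ^ (-2 * n')), add_right_comm]

lemma oKi_twv (e n' h : ℤ) (i j : ℕ) :
    oKi (twv q s t φ e n' h i j) = q ^ (2 * n') • twv q s t φ e n' (h - 1) i j := by
  rw [map_twv]
  simp only [oKi_sgl, twv, smul_add, Finsupp.smul_sum, smul_smul]
  congr 2
  · rw [mul_comm, sub_add_eq_add_sub]
  · rw [mul_comm, sub_add_eq_add_sub]
  · funext a c
    rw [mul_comm (q ^ (2 * n')), sub_add_eq_add_sub]

lemma oF_twv {n' : ℤ} (hn : 0 ≤ n') (e h : ℤ) (i j : ℕ) :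
    oF (twv q s t φ e n' h i j) = twv q s t φ e (n' + 1) h i j := by
  rw [map_twv]
  simp only [oF_sgl_nonneg q s t φ hn, twv]

lemma oE_twv {n' : ℤ} (hn : n' ≤ 0) (e h : ℤ) (i j : ℕ) :
    oE (twv q s t φ e n' h i j) = twv q s t φ e (n' - 1) h i j := by
  rw [map_twv]
  simp only [oE_sgl_nonpos q s t φ hn, twv]

end S15
namespace S15

variable {F : Type*} [Field F] (q : F) (s t : ℤ) (φ : LaurentPolynomial F)

local notation "oCs" => gop (F := F) q s t φ BGen.cs
local notation "oCt" => gop (F := F) q s t φ BGen.ct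
local notation "oK" => gop (F := F) q s t φ BGen.k
local notation "oKi" => gop (F := F) q s t φ BGen.kinv
local notation "oF" => gop (F := F) q s t φ BGen.f
local notation "oE" => gop (F := F) q s t φ BGen.e

variable (hq0 : q ≠ 0)
include hq0

lemma zpw (a b : ℤ) : q ^ (a + b) = q ^ a * q ^ b := zpow_add₀ hq0 a b

lemma oKpow_sgl (m : ℕ) (n h : ℤ) (i j : ℕ) :
    (oK ^ m) (sgl n h i j) = q ^ (-2 * n * m) • sgl n (h + m) i j := by
  induction m with
  | zero => simp
  | succ m ih =>
    rw [pow_succ', Module.End.mul_apply, ih, map_smul, oK_sgl]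
    rw [smul_smul, ← zpw q hq0, show -2*n*m + -2*n = -2*n*(m+1 : ℕ) by push_cast; ring,
      show h + m + 1 = h + (m+1 : ℕ) by push_cast; ring]

lemma oKipow_sgl (m : ℕ) (n h : ℤ) (i j : ℕ) :
    (oKi ^ m) (sgl n h i j) = q ^ (2 * n * m) • sgl n (h - m) i j := by
  induction m with
  | zero => simp
  | succ m ih =>
    rw [pow_succ', Module.End.mul_apply, ih, map_smul, oKi_sgl]
    rw [smul_smul, ← zpw q hq0, show 2*n*m + 2*n = 2*n*(m+1 : ℕ) by push_cast; ring,
      show h - m - 1 = h - (m+1 : ℕ) by push_cast; ring]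

lemma kz_sgl (a n h : ℤ) (i j : ℕ) :
    zpow2 oK oKi a (sgl n h i j) = q ^ (-2 * n * a) • sgl n (h + a) i j := by
  unfold zpow2
  by_cases ha : 0 ≤ a
  · rw [if_pos ha, oKpow_sgl q s t φ hq0, Int.toNat_of_nonneg ha]
  · rw [if_neg ha, oKipow_sgl q s t φ hq0, Int.toNat_of_nonneg (by omega : (0:ℤ) ≤ -a)]
    rw [show 2*n*-a = -2*n*a by ring, show h - -a = h + a by ring]

end S15
namespace S15

variable {F : Type*} [Field F] (q : F) (s t : ℤ) (φ : LaurentPolynomial F)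

local notation "oCs" => gop (F := F) q s t φ BGen.cs
local notation "oCt" => gop (F := F) q s t φ BGen.ct
local notation "oK" => gop (F := F) q s t φ BGen.k
local notation "oKi" => gop (F := F) q s t φ BGen.kinv
local notation "oF" => gop (F := F) q s t φ BGen.f
local notation "oE" => gop (F := F) q s t φ BGen.e

lemma endext {f g : Module.End F (W F)} (h : ∀ n hh i j, f (sgl n hh i j) = g (sgl n hh i j)) :
    f = g :=
  Finsupp.lhom_ext fun p b => by
    obtain ⟨n, hh, i, j⟩ := p
    rw [show (Finsupp.single (n,hh,i,j) b : W F) = b • sgl n hh i j by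
      simp [sgl, Finsupp.smul_single], map_smul, map_smul, h]

/-- operator corresponding to `leval φ c K K⁻¹`. -/
def lop (c : F) : Module.End F (W F) :=
  φ.coeff.sum fun a b => (b * c ^ a) • zpow2 (gop q s t φ BGen.k) (gop q s t φ BGen.kinv) a

lemma sc2 (hq0 : q ≠ 0) (a b : ℤ) (h : a = 2 + b) : q ^ a = q ^ (2:ℕ) * q ^ b := by
  subst h
  rw [← zpow_natCast q 2, ← zpw q hq0]
  norm_num

lemma sc2inv (hq0 : q ≠ 0) (a b : ℤ) (h : a = -2 + b) : q ^ a = (q ^ (2:ℕ))⁻¹ * q ^ b := by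
  subst h
  rw [← zpow_natCast q 2, ← zpow_neg, ← zpw q hq0]
  norm_num

lemma rel_cs_comm (g : BGen) : oCs * gop q s t φ g = gop q s t φ g * oCs := by
  refine endext fun n h i j => ?_
  simp only [Module.End.mul_apply]
  cases g with
  | cs => simp only [oCs_sgl]
  | ct => simp only [oCs_sgl, oCt_sgl]
  | k => simp only [oCs_sgl, oK_sgl, map_smul]
  | kinv => simp only [oCs_sgl, oKi_sgl, map_smul]
  | e =>
    by_cases hn : n ≤ 0
    · rw [oE_sgl_nonpos q s t φ hn, oCs_sgl, oCs_sgl, oE_sgl_nonpos q s t φ hn]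
    · rw [oE_sgl_pos q s t φ hn, oCs_twv, oCs_sgl, oE_sgl_pos q s t φ hn]
  | f =>
    by_cases hn : 0 ≤ n
    · rw [oF_sgl_nonneg q s t φ hn, oCs_sgl, oCs_sgl, oF_sgl_nonneg q s t φ hn]
    · rw [oF_sgl_neg q s t φ hn, oCs_twv, oCs_sgl, oF_sgl_neg q s t φ hn]

lemma rel_ct_comm (g : BGen) : oCt * gop q s t φ g = gop q s t φ g * oCt := by
  refine endext fun n h i j => ?_
  simp only [Module.End.mul_apply]
  cases g with
  | cs => simp only [oCs_sgl, oCt_sgl]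
  | ct => simp only [oCt_sgl]
  | k => simp only [oCt_sgl, oK_sgl, map_smul]
  | kinv => simp only [oCt_sgl, oKi_sgl, map_smul]
  | e =>
    by_cases hn : n ≤ 0
    · rw [oE_sgl_nonpos q s t φ hn, oCt_sgl, oCt_sgl, oE_sgl_nonpos q s t φ hn]
    · rw [oE_sgl_pos q s t φ hn, oCt_twv, oCt_sgl, oE_sgl_pos q s t φ hn]
  | f =>
    by_cases hn : 0 ≤ n
    · rw [oF_sgl_nonneg q s t φ hn, oCt_sgl, oCt_sgl, oF_sgl_nonneg q s t φ hn]
    · rw [oF_sgl_neg q s t φ hn, oCt_twv, oCt_sgl, oF_sgl_neg q s t φ hn]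

lemma rel_kki (hq0 : q ≠ 0) : oK * oKi = 1 := by
  refine endext fun n h i j => ?_
  rw [Module.End.mul_apply, oKi_sgl, map_smul, oK_sgl, smul_smul, ← zpw q hq0]
  simp

lemma rel_kik (hq0 : q ≠ 0) : oKi * oK = 1 := by
  refine endext fun n h i j => ?_
  rw [Module.End.mul_apply, oK_sgl, map_smul, oKi_sgl, smul_smul, ← zpw q hq0]
  simp

lemma rel_ke (hq0 : q ≠ 0) : oK * oE = q ^ 2 • (oE * oK) := by
  refine endext fun n h i j => ?_
  rw [Module.End.mul_apply, LinearMap.smul_apply, Module.End.mul_apply, oK_sgl, map_smul]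
  by_cases hn : n ≤ 0
  · rw [oE_sgl_nonpos q s t φ hn, oE_sgl_nonpos q s t φ hn, oK_sgl, smul_smul,
      ← sc2 q hq0 _ _ (by ring : -2*(n-1) = 2 + -2*n)]
  · rw [oE_sgl_pos q s t φ hn, oE_sgl_pos q s t φ hn, oK_twv, smul_smul,
      ← sc2 q hq0 _ _ (by ring : -2*(n-1) = 2 + -2*n)]

lemma rel_kf (hq0 : q ≠ 0) : oK * oF = (q ^ 2)⁻¹ • (oF * oK) := by
  refine endext fun n h i j => ?_
  rw [Module.End.mul_apply, LinearMap.smul_apply, Module.End.mul_apply, oK_sgl, map_smul]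
  by_cases hn : 0 ≤ n
  · rw [oF_sgl_nonneg q s t φ hn, oF_sgl_nonneg q s t φ hn, oK_sgl, smul_smul,
      ← sc2inv q hq0 _ _ (by ring : -2*(n+1) = -2 + -2*n)]
  · rw [oF_sgl_neg q s t φ hn, oF_sgl_neg q s t φ hn, oK_twv, smul_smul,
      ← sc2inv q hq0 _ _ (by ring : -2*(n+1) = -2 + -2*n)]

end S15
namespace S15

variable {F : Type*} [Field F] (q : F) (s t : ℤ) (φ : LaurentPolynomial F)

local notation "oCs" => gop (F := F) q s t φ BGen.cs
local notation "oCt" => gop (F := F) q s t φ BGen.ct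
local notation "oK" => gop (F := F) q s t φ BGen.k
local notation "oKi" => gop (F := F) q s t φ BGen.kinv
local notation "oF" => gop (F := F) q s t φ BGen.f
local notation "oE" => gop (F := F) q s t φ BGen.e

lemma scmul (hq0 : q ≠ 0) (a b c : ℤ) (h : c = a + b) : q ^ a * q ^ b = q ^ c := by
  subst h
  exact (zpw q hq0 a b).symm

lemma lop_sgl (c : F) (n h : ℤ) (i j : ℕ) (hq0 : q ≠ 0) :
    lop q s t φ c (sgl n h i j)
      = φ.coeff.sum fun a b => (b * c ^ a * q ^ (-2 * n * a)) • sgl n (h + a) i j := by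
  unfold lop Finsupp.sum
  rw [LinearMap.coe_sum, Finset.sum_apply]
  refine Finset.sum_congr rfl fun a _ => ?_
  rw [LinearMap.smul_apply, kz_sgl q s t φ hq0, smul_smul]

lemma theta_fe_sgl (hq0 : q ≠ 0) (n h : ℤ) (i j : ℕ) :
    (q ^ s • (oCs * zpow2 oK oKi s) + q ^ t • (oCt * zpow2 oK oKi t) + lop q s t φ q)
        (sgl n h i j) = twv q s t φ (1 - 2*n) n h i j := by
  rw [LinearMap.add_apply, LinearMap.add_apply, LinearMap.smul_apply, LinearMap.smul_apply,
    Module.End.mul_apply, Module.End.mul_apply, kz_sgl q s t φ hq0, kz_sgl q s t φ hq0,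
    map_smul, map_smul, oCs_sgl, oCt_sgl, lop_sgl q s t φ _ _ _ _ _ hq0,
    smul_smul, smul_smul, scmul q hq0 _ _ _ (by ring : s*(1-2*n) = s + -2*n*s),
    scmul q hq0 _ _ _ (by ring : t*(1-2*n) = t + -2*n*t)]
  unfold twv
  congr 1
  refine Finsupp.sum_congr fun a _ => ?_
  rw [mul_assoc, scmul q hq0 _ _ _ (by ring : a*(1-2*n) = a + -2*n*a)]

lemma theta_ef_sgl (hq0 : q ≠ 0) (n h : ℤ) (i j : ℕ) :
    (q ^ (-s) • (oCs * zpow2 oK oKi s) + q ^ (-t) • (oCt * zpow2 oK oKi t) + lop q s t φ q⁻¹)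
        (sgl n h i j) = twv q s t φ (-2*n - 1) n h i j := by
  rw [LinearMap.add_apply, LinearMap.add_apply, LinearMap.smul_apply, LinearMap.smul_apply,
    Module.End.mul_apply, Module.End.mul_apply, kz_sgl q s t φ hq0, kz_sgl q s t φ hq0,
    map_smul, map_smul, oCs_sgl, oCt_sgl, lop_sgl q s t φ _ _ _ _ _ hq0,
    smul_smul, smul_smul, scmul q hq0 _ _ _ (by ring : s*(-2*n-1) = -s + -2*n*s),
    scmul q hq0 _ _ _ (by ring : t*(-2*n-1) = -t + -2*n*t)]
  unfold twv
  congr 1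
  refine Finsupp.sum_congr fun a _ => ?_
  rw [inv_zpow, ← zpow_neg, mul_assoc, scmul q hq0 _ _ _ (by ring : a*(-2*n-1) = -a + -2*n*a)]

lemma rel_fe (hq0 : q ≠ 0) :
    oF * oE = q ^ s • (oCs * zpow2 oK oKi s) + q ^ t • (oCt * zpow2 oK oKi t) + lop q s t φ q := by
  refine endext fun n h i j => ?_
  rw [theta_fe_sgl q s t φ hq0, Module.End.mul_apply]
  by_cases hn : n ≤ 0
  · rw [oE_sgl_nonpos q s t φ hn, oF_sgl_neg q s t φ (by omega), show -2*(n-1)-1 = 1-2*n by ring,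
      show n - 1 + 1 = n by ring]
  · rw [oE_sgl_pos q s t φ hn, oF_twv q s t φ (by omega : (0:ℤ) ≤ n - 1),
      show n - 1 + 1 = n by ring]

lemma rel_ef (hq0 : q ≠ 0) :
    oE * oF = q ^ (-s) • (oCs * zpow2 oK oKi s) + q ^ (-t) • (oCt * zpow2 oK oKi t)
      + lop q s t φ q⁻¹ := by
  refine endext fun n h i j => ?_
  rw [theta_ef_sgl q s t φ hq0, Module.End.mul_apply]
  by_cases hn : 0 ≤ n
  · rw [oF_sgl_nonneg q s t φ hn, oE_sgl_pos q s t φ (by omega), show 1-2*(n+1) = -2*n-1 by ring,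
      show n + 1 - 1 = n by ring]
  · rw [oF_sgl_neg q s t φ hn, oE_twv q s t φ (by omega : n + 1 ≤ 0),
      show n + 1 - 1 = n by ring]

end S15
namespace S15

variable {F : Type*} [Field F] (q : F) (s t : ℤ) (φ : LaurentPolynomial F)

local notation "oCs" => gop (F := F) q s t φ BGen.cs
local notation "oCt" => gop (F := F) q s t φ BGen.ct
local notation "oK" => gop (F := F) q s t φ BGen.k
local notation "oKi" => gop (F := F) q s t φ BGen.kinv
local notation "oF" => gop (F := F) q s t φ BGen.f
local notation "oE" => gop (F := F) q s t φ BGen.e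

lemma map_zpow2 {M N FF : Type*} [Monoid M] [Monoid N] [FunLike FF M N]
    [MonoidHomClass FF M N] (f : FF) (x y : M) (i : ℤ) :
    f (zpow2 x y i) = zpow2 (f x) (f y) i := by
  unfold zpow2
  split <;> rw [map_pow]

lemma map_leval {B C : Type*} [Ring B] [Algebra F B] [Ring C] [Algebra F C]
    (f : B →ₐ[F] C) (ψ : LaurentPolynomial F) (c : F) (x y : B) :
    f (leval ψ c x y) = Finsupp.sum ψ.coeff fun a b => (b * c ^ a) • zpow2 (f x) (f y) a := by
  unfold _root_.leval
  rw [map_finsuppSum]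
  exact Finsupp.sum_congr fun a _ => by rw [map_smul, map_zpow2]

/-- the representation, on the level of the free algebra. -/
def toEnd : FreeAlgebra F BGen →ₐ[F] Module.End F (W F) :=
  FreeAlgebra.lift F (gop q s t φ)

@[simp] lemma toEnd_ι (g : BGen) : toEnd q s t φ (FreeAlgebra.ι F g) = gop q s t φ g :=
  FreeAlgebra.lift_ι_apply _ _

lemma cs_comm_all (x : FreeAlgebra F BGen) :
    oCs * toEnd q s t φ x = toEnd q s t φ x * oCs := by
  induction x with
  | grade0 r => rw [AlgHom.commutes, Algebra.commutes]
  | grade1 g => rw [toEnd_ι]; exact rel_cs_comm q s t φ g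
  | mul a b ha hb => rw [map_mul, ← mul_assoc, ha, mul_assoc, hb, mul_assoc]
  | add a b ha hb => rw [map_add, mul_add, add_mul, ha, hb]

lemma ct_comm_all (x : FreeAlgebra F BGen) :
    oCt * toEnd q s t φ x = toEnd q s t φ x * oCt := by
  induction x with
  | grade0 r => rw [AlgHom.commutes, Algebra.commutes]
  | grade1 g => rw [toEnd_ι]; exact rel_ct_comm q s t φ g
  | mul a b ha hb => rw [map_mul, ← mul_assoc, ha, mul_assoc, hb, mul_assoc]
  | add a b ha hb => rw [map_add, mul_add, add_mul, ha, hb]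

lemma hrel (hq0 : q ≠ 0) : ∀ ⦃x y⦄, BRel q s t φ x y → toEnd q s t φ x = toEnd q s t φ y := by
  intro x y r
  cases r with
  | csCentral x => rw [map_mul, map_mul, toEnd_ι]; exact cs_comm_all q s t φ x
  | ctCentral x => rw [map_mul, map_mul, toEnd_ι]; exact ct_comm_all q s t φ x
  | kkinv => rw [map_mul, map_one, toEnd_ι, toEnd_ι]; exact rel_kki q s t φ hq0
  | kinvk => rw [map_mul, map_one, toEnd_ι, toEnd_ι]; exact rel_kik q s t φ hq0
  | ke => rw [map_mul, map_smul, map_mul, toEnd_ι, toEnd_ι]; exact rel_ke q s t φ hq0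
  | kf => rw [map_mul, map_smul, map_mul, toEnd_ι, toEnd_ι]; exact rel_kf q s t φ hq0
  | fe =>
    have hl := map_leval (C := Module.End F (W F)) (toEnd q s t φ) φ q (FreeAlgebra.ι F BGen.k)
      (FreeAlgebra.ι F BGen.kinv)
    rw [map_mul, map_add, map_add, map_smul, map_smul, map_mul, map_mul, map_zpow2, map_zpow2,
      hl]
    simp only [toEnd_ι]
    exact rel_fe q s t φ hq0
  | ef =>
    have hl := map_leval (C := Module.End F (W F)) (toEnd q s t φ) φ q⁻¹ (FreeAlgebra.ι F BGen.k)
      (FreeAlgebra.ι F BGen.kinv)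
    rw [map_mul, map_add, map_add, map_smul, map_smul, map_mul, map_mul, map_zpow2, map_zpow2,
      hl]
    simp only [toEnd_ι]
    exact rel_ef q s t φ hq0

end S15
namespace S15

variable {F : Type*} [Field F] (q : F) (s t : ℤ) (φ : LaurentPolynomial F)

local notation "oCs" => gop (F := F) q s t φ BGen.cs
local notation "oCt" => gop (F := F) q s t φ BGen.ct
local notation "oK" => gop (F := F) q s t φ BGen.k
local notation "oKi" => gop (F := F) q s t φ BGen.kinv
local notation "oF" => gop (F := F) q s t φ BGen.f
local notation "oE" => gop (F := F) q s t φ BGen.e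

/-- The representation of `B_q(s,t,φ)` on `W`. -/
def toEndB (hq0 : q ≠ 0) : BAlg q s t φ →ₐ[F] Module.End F (W F) :=
  RingQuot.liftAlgHom F ⟨toEnd q s t φ, hrel q s t φ hq0⟩

lemma toEndB_bgen (hq0 : q ≠ 0) (g : BGen) :
    toEndB q s t φ hq0 (bgen q s t φ g) = gop q s t φ g := by
  unfold bgen toEndB
  exact (RingQuot.liftAlgHom_mkAlgHom_apply F (toEnd q s t φ) (hrel q s t φ hq0)
    (FreeAlgebra.ι F g)).trans (toEnd_ι q s t φ g)

/-- The PBW monomials of degree `n`. -/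
def bmon (n : ℤ) (p : ℤ × ℕ × ℕ) : BAlg q s t φ :=
  zpow2 (bgen q s t φ BGen.f) (bgen q s t φ BGen.e) n
    * zpow2 (bgen q s t φ BGen.k) (bgen q s t φ BGen.kinv) p.1
    * bgen q s t φ BGen.cs ^ p.2.1 * bgen q s t φ BGen.ct ^ p.2.2

/-- All PBW monomials. -/
def BM (p : Idx) : BAlg q s t φ := bmon q s t φ p.1 p.2

/-- Evaluation of the representation at the vacuum vector. -/
def evmap (hq0 : q ≠ 0) : BAlg q s t φ →ₗ[F] W F where
  toFun x := toEndB q s t φ hq0 x (sgl 0 0 0 0)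
  map_add' x y := by
    show toEndB q s t φ hq0 (x + y) (sgl 0 0 0 0) = _
    rw [map_add]
    rfl
  map_smul' c x := by
    show toEndB q s t φ hq0 (c • x) (sgl 0 0 0 0) = _
    rw [map_smul]
    rfl

lemma oCspow_sgl (m : ℕ) (n h : ℤ) (i j : ℕ) :
    (oCs ^ m) (sgl n h i j) = sgl n h (i + m) j := by
  induction m with
  | zero => simp
  | succ m ih => rw [pow_succ', Module.End.mul_apply, ih, oCs_sgl, add_assoc]

lemma oCtpow_sgl (m : ℕ) (n h : ℤ) (i j : ℕ) :
    (oCt ^ m) (sgl n h i j) = sgl n h i (j + m) := by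
  induction m with
  | zero => simp
  | succ m ih => rw [pow_succ', Module.End.mul_apply, ih, oCt_sgl, add_assoc]

lemma oFpow_sgl (m : ℕ) {n : ℤ} (hn : 0 ≤ n) (h : ℤ) (i j : ℕ) :
    (oF ^ m) (sgl n h i j) = sgl (n + m) h i j := by
  induction m with
  | zero => simp
  | succ m ih =>
    rw [pow_succ', Module.End.mul_apply, ih, oF_sgl_nonneg q s t φ (by omega),
      show n + m + 1 = n + (m + 1 : ℕ) by push_cast; ring]

lemma oEpow_sgl (m : ℕ) {n : ℤ} (hn : n ≤ 0) (h : ℤ) (i j : ℕ) :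
    (oE ^ m) (sgl n h i j) = sgl (n - m) h i j := by
  induction m with
  | zero => simp
  | succ m ih =>
    rw [pow_succ', Module.End.mul_apply, ih, oE_sgl_nonpos q s t φ (by omega),
      show n - m - 1 = n - (m + 1 : ℕ) by push_cast; ring]

lemma fz_sgl (n : ℤ) (h : ℤ) (i j : ℕ) :
    zpow2 oF oE n (sgl 0 h i j) = sgl n h i j := by
  unfold zpow2
  by_cases hn : 0 ≤ n
  · rw [if_pos hn, oFpow_sgl q s t φ _ le_rfl, Int.toNat_of_nonneg hn, zero_add]
  · rw [if_neg hn, oEpow_sgl q s t φ _ le_rfl, Int.toNat_of_nonneg (by omega : (0:ℤ) ≤ -n)]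
    norm_num

lemma ev_BM (hq0 : q ≠ 0) (p : Idx) :
    evmap q s t φ hq0 (BM q s t φ p) = Finsupp.single p 1 := by
  obtain ⟨n, h, i, j⟩ := p
  show toEndB q s t φ hq0 (bmon q s t φ n (h,i,j)) (sgl 0 0 0 0) = _
  unfold bmon
  rw [map_mul, map_mul, map_mul, map_pow, map_pow, map_zpow2, map_zpow2]
  simp only [toEndB_bgen]
  rw [Module.End.mul_apply, Module.End.mul_apply, Module.End.mul_apply,
    oCtpow_sgl, oCspow_sgl, kz_sgl q s t φ hq0]
  rw [show (-2 : ℤ) * 0 * h = 0 by ring, zpow_zero, one_smul, zero_add, zero_add, zero_add,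
    fz_sgl]
  rfl

lemma BM_indep (hq0 : q ≠ 0) : LinearIndependent F (BM q s t φ) := by
  apply LinearIndependent.of_comp (evmap q s t φ hq0)
  have : (evmap q s t φ hq0 ∘ BM q s t φ) = fun p : Idx => Finsupp.single p (1 : F) := by
    funext p
    exact ev_BM q s t φ hq0 p
  rw [this]
  exact (Finsupp.basisSingleOne (R := F) (ι := Idx)).linearIndependent

end S15
namespace S15

variable {F : Type*} [Field F] (q : F) (s t : ℤ) (φ : LaurentPolynomial F)

local notation "bcs" => bgen q s t φ BGen.cs
local notation "bct" => bgen q s t φ BGen.ct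
local notation "bk" => bgen q s t φ BGen.k
local notation "bki" => bgen q s t φ BGen.kinv
local notation "bf" => bgen q s t φ BGen.f
local notation "be" => bgen q s t φ BGen.e
local notation "mkB" => RingQuot.mkAlgHom F (BRel q s t φ)

lemma cs_comm (x : BAlg q s t φ) : bcs * x = x * bcs := by
  obtain ⟨y, rfl⟩ := RingQuot.mkAlgHom_surjective F (BRel q s t φ) x
  have h := RingQuot.mkAlgHom_rel F (BRel.csCentral (q := q) (s := s) (t := t) (φ := φ) y)
  rwa [map_mul, map_mul] at h

lemma ct_comm (x : BAlg q s t φ) : bct * x = x * bct := by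
  obtain ⟨y, rfl⟩ := RingQuot.mkAlgHom_surjective F (BRel q s t φ) x
  have h := RingQuot.mkAlgHom_rel F (BRel.ctCentral (q := q) (s := s) (t := t) (φ := φ) y)
  rwa [map_mul, map_mul] at h

lemma kki : bk * bki = 1 := by
  have h := RingQuot.mkAlgHom_rel F (BRel.kkinv (q := q) (s := s) (t := t) (φ := φ))
  rwa [map_mul, map_one] at h

lemma kik : bki * bk = 1 := by
  have h := RingQuot.mkAlgHom_rel F (BRel.kinvk (q := q) (s := s) (t := t) (φ := φ))
  rwa [map_mul, map_one] at h

lemma kE : bk * be = q ^ (2:ℤ) • (be * bk) := by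
  have h := RingQuot.mkAlgHom_rel F (BRel.ke (q := q) (s := s) (t := t) (φ := φ))
  rw [map_mul, map_smul, map_mul] at h
  rwa [show (2:ℤ) = ((2:ℕ):ℤ) by norm_num, zpow_natCast]

lemma kF : bk * bf = q ^ (-2:ℤ) • (bf * bk) := by
  have h := RingQuot.mkAlgHom_rel F (BRel.kf (q := q) (s := s) (t := t) (φ := φ))
  rw [map_mul, map_smul, map_mul] at h
  rwa [show (-2:ℤ) = -((2:ℕ):ℤ) by norm_num, zpow_neg, zpow_natCast]

lemma e_ki : be * bki = q ^ (2:ℤ) • (bki * be) := by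
  have h : bki * (bk * be) * bki = bki * (q ^ (2:ℤ) • (be * bk)) * bki := by rw [kE]
  rw [← mul_assoc bki bk be, kik, one_mul, mul_smul_comm, smul_mul_assoc,
    ← mul_assoc bki be bk, mul_assoc (bki * be) bk bki, kki, mul_one] at h
  exact h

lemma f_ki : bf * bki = q ^ (-2:ℤ) • (bki * bf) := by
  have h : bki * (bk * bf) * bki = bki * (q ^ (-2:ℤ) • (bf * bk)) * bki := by rw [kF]
  rw [← mul_assoc bki bk bf, kik, one_mul, mul_smul_comm, smul_mul_assoc,
    ← mul_assoc bki bf bk, mul_assoc (bki * bf) bk bki, kki, mul_one] at h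
  exact h

lemma smul_flip (hq0 : q ≠ 0) (a : ℤ) {x y : BAlg q s t φ} (h : x = q ^ a • y) :
    y = q ^ (-a) • x := by
  rw [h, smul_smul, zpow_neg, inv_mul_cancel₀ (zpow_ne_zero a hq0), one_smul]

lemma kiE (hq0 : q ≠ 0) : bki * be = q ^ (-2:ℤ) • (be * bki) :=
  smul_flip q s t φ hq0 2 (e_ki q s t φ)

lemma kiF (hq0 : q ≠ 0) : bki * bf = q ^ (2:ℤ) • (bf * bki) := by
  have h := smul_flip q s t φ hq0 (-2) (f_ki q s t φ)
  rwa [neg_neg] at h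

/-- `K` as a unit. -/
def uK : (BAlg q s t φ)ˣ := ⟨bk, bki, kki q s t φ, kik q s t φ⟩

lemma zk_eq (a : ℤ) : zpow2 bk bki a = ((uK q s t φ ^ a : (BAlg q s t φ)ˣ) : BAlg q s t φ) := by
  unfold zpow2
  by_cases ha : 0 ≤ a
  · rw [if_pos ha, ← Int.toNat_of_nonneg ha, zpow_natCast, Units.val_pow_eq_pow_val]
    rfl
  · rw [if_neg ha, show a = -((-a).toNat : ℤ) by omega, zpow_neg, zpow_natCast, ← inv_pow,
      Units.val_pow_eq_pow_val, show (- -((-a).toNat:ℤ)).toNat = (-a).toNat by omega]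
    rfl

lemma zk_zero : zpow2 bk bki (0:ℤ) = 1 := by rw [zk_eq, zpow_zero, Units.val_one]

lemma zk_succ (a : ℤ) : zpow2 bk bki (a + 1) = bk * zpow2 bk bki a := by
  rw [zk_eq, zk_eq, show a + 1 = 1 + a by ring, zpow_add, zpow_one, Units.val_mul]
  rfl

lemma zk_pred (a : ℤ) : zpow2 bk bki (a - 1) = bki * zpow2 bk bki a := by
  rw [zk_eq, zk_eq, show a - 1 = -1 + a by ring, zpow_add, Units.val_mul, zpow_neg_one]
  rfl

lemma zk_zk (a b : ℤ) : zpow2 bk bki a * zpow2 bk bki b = zpow2 bk bki (a + b) := by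
  rw [zk_eq, zk_eq, zk_eq, zpow_add, Units.val_mul]

end S15
namespace S15

variable {F : Type*} [Field F] (q : F) (s t : ℤ) (φ : LaurentPolynomial F)

local notation "bcs" => bgen q s t φ BGen.cs
local notation "bct" => bgen q s t φ BGen.ct
local notation "bk" => bgen q s t φ BGen.k
local notation "bki" => bgen q s t φ BGen.kinv
local notation "bf" => bgen q s t φ BGen.f
local notation "be" => bgen q s t φ BGen.e
local notation "zkk" => zpow2 (bgen q s t φ BGen.k) (bgen q s t φ BGen.kinv)
local notation "zff" => zpow2 (bgen q s t φ BGen.f) (bgen q s t φ BGen.e)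

/-- value of `FE`. -/
def thFE : BAlg q s t φ :=
  q ^ s • (bcs * zkk s) + q ^ t • (bct * zkk t) + φ.coeff.sum fun a b => (b * q ^ a) • zkk a

/-- value of `EF`. -/
def thEF : BAlg q s t φ :=
  q ^ (-s) • (bcs * zkk s) + q ^ (-t) • (bct * zkk t)
    + φ.coeff.sum fun a b => (b * q⁻¹ ^ a) • zkk a

lemma rel_FE : bf * be = thFE q s t φ := by
  have h := RingQuot.mkAlgHom_rel F (BRel.fe (q := q) (s := s) (t := t) (φ := φ))
  rw [map_mul, map_add, map_add, map_smul, map_smul, map_mul, map_mul, map_zpow2,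
    map_zpow2] at h
  refine h.trans ?_
  congr 1
  exact map_leval (RingQuot.mkAlgHom F (BRel q s t φ)) φ q
    (FreeAlgebra.ι F BGen.k) (FreeAlgebra.ι F BGen.kinv)

lemma rel_EF : be * bf = thEF q s t φ := by
  have h := RingQuot.mkAlgHom_rel F (BRel.ef (q := q) (s := s) (t := t) (φ := φ))
  rw [map_mul, map_add, map_add, map_smul, map_smul, map_mul, map_mul, map_zpow2,
    map_zpow2] at h
  refine h.trans ?_
  congr 1
  exact map_leval (RingQuot.mkAlgHom F (BRel q s t φ)) φ q⁻¹
    (FreeAlgebra.ι F BGen.k) (FreeAlgebra.ι F BGen.kinv)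

lemma zkE (hq0 : q ≠ 0) : ∀ a : ℤ, zkk a * be = q ^ (2 * a) • (be * zkk a) := by
  intro a
  induction a using Int.induction_on with
  | zero => rw [zk_zero]; simp
  | succ i ih =>
    rw [zk_succ, mul_assoc, ih, mul_smul_comm, ← mul_assoc, kE, smul_mul_assoc, smul_smul,
      mul_assoc, ← zk_succ, scmul q hq0 _ _ _ (by push_cast; ring : 2*((i:ℤ)+1) = 2*i + 2)]
  | pred i ih =>
    rw [show (-(i:ℤ) - 1) = (-(i:ℤ)) - 1 by ring, zk_pred, mul_assoc, ih, mul_smul_comm,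
      ← mul_assoc, kiE q s t φ hq0, smul_mul_assoc, smul_smul, mul_assoc, ← zk_pred,
      scmul q hq0 _ _ _ (by push_cast; ring : 2*(-(i:ℤ)-1) = 2*(-(i:ℤ)) + -2)]

lemma zkF (hq0 : q ≠ 0) : ∀ a : ℤ, zkk a * bf = q ^ (-2 * a) • (bf * zkk a) := by
  intro a
  induction a using Int.induction_on with
  | zero => rw [zk_zero]; simp
  | succ i ih =>
    rw [zk_succ, mul_assoc, ih, mul_smul_comm, ← mul_assoc, kF, smul_mul_assoc, smul_smul,
      mul_assoc, ← zk_succ, scmul q hq0 _ _ _ (by push_cast; ring : -2*((i:ℤ)+1) = -2*i + -2)]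
  | pred i ih =>
    rw [show (-(i:ℤ) - 1) = (-(i:ℤ)) - 1 by ring, zk_pred, mul_assoc, ih, mul_smul_comm,
      ← mul_assoc, kiF q s t φ hq0, smul_mul_assoc, smul_smul, mul_assoc, ← zk_pred,
      scmul q hq0 _ _ _ (by push_cast; ring : -2*(-(i:ℤ)-1) = -2*(-(i:ℤ)) + 2)]

lemma zkEpow (hq0 : q ≠ 0) (a : ℤ) : ∀ m : ℕ, zkk a * be ^ m = q ^ (2 * a * m) • (be ^ m * zkk a)
  | 0 => by simp
  | (m+1) => by
    rw [pow_succ', ← mul_assoc, zkE q s t φ hq0, smul_mul_assoc, mul_assoc, zkEpow hq0 a m,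
      mul_smul_comm, smul_smul, ← mul_assoc, ← pow_succ',
      scmul q hq0 _ _ _ (by push_cast; ring : 2*a*((m:ℤ)+1) = 2*a + 2*a*m)]
    norm_cast

lemma zkFpow (hq0 : q ≠ 0) (a : ℤ) : ∀ m : ℕ, zkk a * bf ^ m = q ^ (-2 * a * m) • (bf ^ m * zkk a)
  | 0 => by simp
  | (m+1) => by
    rw [pow_succ', ← mul_assoc, zkF q s t φ hq0, smul_mul_assoc, mul_assoc, zkFpow hq0 a m,
      mul_smul_comm, smul_smul, ← mul_assoc, ← pow_succ',
      scmul q hq0 _ _ _ (by push_cast; ring : -2*a*((m:ℤ)+1) = -2*a + -2*a*m)]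
    norm_cast

lemma zk_zf (hq0 : q ≠ 0) (a n : ℤ) : zkk a * zff n = q ^ (-2 * a * n) • (zff n * zkk a) := by
  by_cases hn : 0 ≤ n
  · rw [show zff n = bf ^ n.toNat by unfold zpow2; rw [if_pos hn], zkFpow q s t φ hq0,
      Int.toNat_of_nonneg hn]
  · rw [show zff n = be ^ (-n).toNat by unfold zpow2; rw [if_neg hn], zkEpow q s t φ hq0,
      Int.toNat_of_nonneg (by omega : (0:ℤ) ≤ -n),
      show 2 * a * -n = -2 * a * n by ring]

end S15
namespace S15

variable {F : Type*} [Field F] (q : F) (s t : ℤ) (φ : LaurentPolynomial F)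

local notation "bcs" => bgen q s t φ BGen.cs
local notation "bct" => bgen q s t φ BGen.ct
local notation "bk" => bgen q s t φ BGen.k
local notation "bki" => bgen q s t φ BGen.kinv
local notation "bf" => bgen q s t φ BGen.f
local notation "be" => bgen q s t φ BGen.e
local notation "zkk" => zpow2 (bgen q s t φ BGen.k) (bgen q s t φ BGen.kinv)
local notation "zff" => zpow2 (bgen q s t φ BGen.f) (bgen q s t φ BGen.e)

/-- The span of the degree-`n` monomials. -/
def Dn (n : ℤ) : Submodule F (BAlg q s t φ) := Submodule.span F (Set.range (bmon q s t φ n))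

lemma mon_cs (n h : ℤ) (i j : ℕ) : bcs * bmon q s t φ n (h,i,j) = bmon q s t φ n (h,i+1,j) := by
  rw [cs_comm]
  unfold bmon
  rw [mul_assoc (zff n * zkk h * bcs ^ i) (bct ^ j) bcs, ← cs_comm,
    ← mul_assoc (zff n * zkk h * bcs ^ i) bcs (bct ^ j),
    mul_assoc (zff n * zkk h) (bcs ^ i) bcs, ← pow_succ]

lemma mon_ct (n h : ℤ) (i j : ℕ) : bct * bmon q s t φ n (h,i,j) = bmon q s t φ n (h,i,j+1) := by
  rw [ct_comm]
  unfold bmon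
  rw [mul_assoc (zff n * zkk h * bcs ^ i) (bct ^ j) bct, ← pow_succ]

lemma mon_zk (hq0 : q ≠ 0) (a n h : ℤ) (i j : ℕ) :
    zkk a * bmon q s t φ n (h,i,j) = q ^ (-2*a*n) • bmon q s t φ n (a+h,i,j) := by
  unfold bmon
  simp only [← mul_assoc]
  rw [zk_zf q s t φ hq0]
  simp only [smul_mul_assoc]
  rw [mul_assoc (zff n) (zkk a) (zkk h), zk_zk]

lemma mon_cszk (hq0 : q ≠ 0) (a n h : ℤ) (i j : ℕ) :
    (bcs * zkk a) * bmon q s t φ n (h,i,j) = q ^ (-2*a*n) • bmon q s t φ n (a+h,i+1,j) := by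
  rw [mul_assoc, mon_zk q s t φ hq0, mul_smul_comm, mon_cs]

lemma mon_ctzk (hq0 : q ≠ 0) (a n h : ℤ) (i j : ℕ) :
    (bct * zkk a) * bmon q s t φ n (h,i,j) = q ^ (-2*a*n) • bmon q s t φ n (a+h,i,j+1) := by
  rw [mul_assoc, mon_zk q s t φ hq0, mul_smul_comm, mon_ct]

lemma thFE_mulD (hq0 : q ≠ 0) (n : ℤ) (p : ℤ × ℕ × ℕ) :
    thFE q s t φ * bmon q s t φ n p ∈ Dn q s t φ n := by
  obtain ⟨h, i, j⟩ := p
  unfold thFE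
  rw [add_mul, add_mul, smul_mul_assoc, smul_mul_assoc, Finsupp.sum_mul,
    mon_cszk q s t φ hq0, mon_ctzk q s t φ hq0]
  refine add_mem (add_mem ?_ ?_) ?_
  · exact Submodule.smul_mem _ _ (Submodule.smul_mem _ _
      (Submodule.subset_span ⟨(s+h,i+1,j), rfl⟩))
  · exact Submodule.smul_mem _ _ (Submodule.smul_mem _ _
      (Submodule.subset_span ⟨(t+h,i,j+1), rfl⟩))
  · rw [Finsupp.sum]
    refine Submodule.sum_mem _ fun a _ => ?_
    rw [smul_mul_assoc, mon_zk q s t φ hq0]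
    exact Submodule.smul_mem _ _ (Submodule.smul_mem _ _
      (Submodule.subset_span ⟨(a+h,i,j), rfl⟩))

lemma thEF_mulD (hq0 : q ≠ 0) (n : ℤ) (p : ℤ × ℕ × ℕ) :
    thEF q s t φ * bmon q s t φ n p ∈ Dn q s t φ n := by
  obtain ⟨h, i, j⟩ := p
  unfold thEF
  rw [add_mul, add_mul, smul_mul_assoc, smul_mul_assoc, Finsupp.sum_mul,
    mon_cszk q s t φ hq0, mon_ctzk q s t φ hq0]
  refine add_mem (add_mem ?_ ?_) ?_
  · exact Submodule.smul_mem _ _ (Submodule.smul_mem _ _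
      (Submodule.subset_span ⟨(s+h,i+1,j), rfl⟩))
  · exact Submodule.smul_mem _ _ (Submodule.smul_mem _ _
      (Submodule.subset_span ⟨(t+h,i,j+1), rfl⟩))
  · rw [Finsupp.sum]
    refine Submodule.sum_mem _ fun a _ => ?_
    rw [smul_mul_assoc, mon_zk q s t φ hq0]
    exact Submodule.smul_mem _ _ (Submodule.smul_mem _ _
      (Submodule.subset_span ⟨(a+h,i,j), rfl⟩))

lemma zf_succ {n : ℤ} (hn : 0 ≤ n) : bf * zff n = zff (n+1) := by
  unfold zpow2
  rw [if_pos hn, if_pos (by omega : (0:ℤ) ≤ n+1), ← pow_succ']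
  congr 1
  omega

lemma zf_pred {n : ℤ} (hn : n < 0) : zff n = be * zff (n+1) := by
  unfold zpow2
  rw [if_neg (by omega : ¬ (0:ℤ) ≤ n)]
  by_cases h1 : 0 ≤ n + 1
  · have hn1 : n = -1 := by omega
    subst hn1
    rw [if_pos h1]
    norm_num
  · rw [if_neg h1, ← pow_succ']
    congr 1
    omega

lemma zf_esucc {n : ℤ} (hn : n ≤ 0) : be * zff n = zff (n-1) := by
  unfold zpow2
  rw [if_neg (by omega : ¬ (0:ℤ) ≤ n-1)]
  by_cases h0 : 0 ≤ n
  · have hn0 : n = 0 := by omega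
    subst hn0
    rw [if_pos h0]
    norm_num
  · rw [if_neg h0, ← pow_succ']
    congr 1
    omega

lemma zf_fsplit {n : ℤ} (hn : 0 < n) : zff n = bf * zff (n-1) := by
  unfold zpow2
  rw [if_pos (by omega : (0:ℤ) ≤ n), if_pos (by omega : (0:ℤ) ≤ n-1), ← pow_succ']
  congr 1
  omega

lemma f_mulMon (hq0 : q ≠ 0) (n : ℤ) (p : ℤ × ℕ × ℕ) :
    bf * bmon q s t φ n p ∈ Dn q s t φ (n+1) := by
  obtain ⟨h, i, j⟩ := p
  by_cases hn : 0 ≤ n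
  · have key : bf * bmon q s t φ n (h,i,j) = bmon q s t φ (n+1) (h,i,j) := by
      unfold bmon
      simp only [← mul_assoc]
      rw [zf_succ q s t φ hn]
    rw [key]
    exact Submodule.subset_span ⟨(h,i,j), rfl⟩
  · have key : bf * bmon q s t φ n (h,i,j) = (bf * be) * bmon q s t φ (n+1) (h,i,j) := by
      unfold bmon
      rw [zf_pred q s t φ (by omega : n < 0)]
      simp only [← mul_assoc]
    rw [key, rel_FE]
    exact thFE_mulD q s t φ hq0 (n+1) (h,i,j)

lemma e_mulMon (hq0 : q ≠ 0) (n : ℤ) (p : ℤ × ℕ × ℕ) :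
    be * bmon q s t φ n p ∈ Dn q s t φ (n-1) := by
  obtain ⟨h, i, j⟩ := p
  by_cases hn : n ≤ 0
  · have key : be * bmon q s t φ n (h,i,j) = bmon q s t φ (n-1) (h,i,j) := by
      unfold bmon
      simp only [← mul_assoc]
      rw [zf_esucc q s t φ hn]
    rw [key]
    exact Submodule.subset_span ⟨(h,i,j), rfl⟩
  · have key : be * bmon q s t φ n (h,i,j) = (be * bf) * bmon q s t φ (n-1) (h,i,j) := by
      unfold bmon
      rw [zf_fsplit q s t φ (by omega : 0 < n)]
      simp only [← mul_assoc]
    rw [key, rel_EF]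
    exact thEF_mulD q s t φ hq0 (n-1) (h,i,j)

end S15
namespace S15

variable {F : Type*} [Field F] (q : F) (s t : ℤ) (φ : LaurentPolynomial F)

local notation "bcs" => bgen q s t φ BGen.cs
local notation "bct" => bgen q s t φ BGen.ct
local notation "bk" => bgen q s t φ BGen.k
local notation "bki" => bgen q s t φ BGen.kinv
local notation "bf" => bgen q s t φ BGen.f
local notation "be" => bgen q s t φ BGen.e
local notation "zkk" => zpow2 (bgen q s t φ BGen.k) (bgen q s t φ BGen.kinv)
local notation "zff" => zpow2 (bgen q s t φ BGen.f) (bgen q s t φ BGen.e)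

lemma mulD_left {x : BAlg q s t φ} {n n' : ℤ}
    (hx : ∀ p, x * bmon q s t φ n p ∈ Dn q s t φ n') :
    ∀ y ∈ Dn q s t φ n, x * y ∈ Dn q s t φ n' := by
  intro y hy
  have hle : Dn q s t φ n ≤ (Dn q s t φ n').comap (LinearMap.mulLeft F x) :=
    Submodule.span_le.mpr (by rintro _ ⟨p, rfl⟩; exact hx p)
  exact hle hy

lemma cs_mulD {n : ℤ} : ∀ y ∈ Dn q s t φ n, bcs * y ∈ Dn q s t φ n :=
  mulD_left q s t φ fun p => by
    obtain ⟨h,i,j⟩ := p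
    rw [mon_cs]
    exact Submodule.subset_span ⟨(h,i+1,j), rfl⟩

lemma ct_mulD {n : ℤ} : ∀ y ∈ Dn q s t φ n, bct * y ∈ Dn q s t φ n :=
  mulD_left q s t φ fun p => by
    obtain ⟨h,i,j⟩ := p
    rw [mon_ct]
    exact Submodule.subset_span ⟨(h,i,j+1), rfl⟩

lemma zk_mulD (hq0 : q ≠ 0) (a : ℤ) {n : ℤ} :
    ∀ y ∈ Dn q s t φ n, zkk a * y ∈ Dn q s t φ n :=
  mulD_left q s t φ fun p => by
    obtain ⟨h,i,j⟩ := p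
    rw [mon_zk q s t φ hq0]
    exact Submodule.smul_mem _ _ (Submodule.subset_span ⟨(a+h,i,j), rfl⟩)

lemma f_mulD (hq0 : q ≠ 0) {n : ℤ} : ∀ y ∈ Dn q s t φ n, bf * y ∈ Dn q s t φ (n+1) :=
  mulD_left q s t φ (f_mulMon q s t φ hq0 n)

lemma e_mulD (hq0 : q ≠ 0) {n : ℤ} : ∀ y ∈ Dn q s t φ n, be * y ∈ Dn q s t φ (n-1) :=
  mulD_left q s t φ (e_mulMon q s t φ hq0 n)

lemma cspow_mulD (i : ℕ) {n : ℤ} : ∀ y ∈ Dn q s t φ n, bcs ^ i * y ∈ Dn q s t φ n := by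
  induction i with
  | zero => intro y hy; rwa [pow_zero, one_mul]
  | succ i ih =>
    intro y hy
    rw [pow_succ', mul_assoc]
    exact cs_mulD q s t φ _ (ih y hy)

lemma ctpow_mulD (j : ℕ) {n : ℤ} : ∀ y ∈ Dn q s t φ n, bct ^ j * y ∈ Dn q s t φ n := by
  induction j with
  | zero => intro y hy; rwa [pow_zero, one_mul]
  | succ j ih =>
    intro y hy
    rw [pow_succ', mul_assoc]
    exact ct_mulD q s t φ _ (ih y hy)

lemma fpow_mulD (hq0 : q ≠ 0) (k : ℕ) {n : ℤ} :
    ∀ y ∈ Dn q s t φ n, bf ^ k * y ∈ Dn q s t φ (n + k) := by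
  induction k with
  | zero => intro y hy; rw [pow_zero, one_mul]; simpa using hy
  | succ k ih =>
    intro y hy
    rw [pow_succ', mul_assoc, show (n + (k+1 : ℕ) : ℤ) = (n + k) + 1 by push_cast; ring]
    exact f_mulD q s t φ hq0 _ (ih y hy)

lemma epow_mulD (hq0 : q ≠ 0) (k : ℕ) {n : ℤ} :
    ∀ y ∈ Dn q s t φ n, be ^ k * y ∈ Dn q s t φ (n - k) := by
  induction k with
  | zero => intro y hy; rw [pow_zero, one_mul]; simpa using hy
  | succ k ih =>
    intro y hy
    rw [pow_succ', mul_assoc, show (n - (k+1 : ℕ) : ℤ) = (n - k) - 1 by push_cast; ring]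
    exact e_mulD q s t φ hq0 _ (ih y hy)

lemma zf_mulD (hq0 : q ≠ 0) (m : ℤ) {n : ℤ} :
    ∀ y ∈ Dn q s t φ n, zff m * y ∈ Dn q s t φ (m + n) := by
  intro y hy
  unfold zpow2
  by_cases hm : 0 ≤ m
  · rw [if_pos hm]
    have := fpow_mulD q s t φ hq0 m.toNat y hy
    rwa [show (n + (m.toNat : ℤ)) = m + n by omega] at this
  · rw [if_neg hm]
    have := epow_mulD q s t φ hq0 (-m).toNat y hy
    rwa [show (n - ((-m).toNat : ℤ)) = m + n by omega] at this

lemma mon_mulD (hq0 : q ≠ 0) (m : ℤ) (p : ℤ × ℕ × ℕ) {n : ℤ} :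
    ∀ y ∈ Dn q s t φ n, bmon q s t φ m p * y ∈ Dn q s t φ (m + n) := by
  intro y hy
  obtain ⟨h,i,j⟩ := p
  unfold bmon
  simp only [mul_assoc]
  exact zf_mulD q s t φ hq0 m _ (zk_mulD q s t φ hq0 h _
    (cspow_mulD q s t φ i _ (ctpow_mulD q s t φ j _ hy)))

lemma D_mulD (hq0 : q ≠ 0) {m n : ℤ} {x y : BAlg q s t φ}
    (hx : x ∈ Dn q s t φ m) (hy : y ∈ Dn q s t φ n) : x * y ∈ Dn q s t φ (m + n) := by
  induction hx using Submodule.span_induction with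
  | mem x hx =>
    obtain ⟨p, rfl⟩ := hx
    exact mon_mulD q s t φ hq0 m p y hy
  | zero => rw [zero_mul]; exact zero_mem _
  | add a b _ _ iha ihb => rw [add_mul]; exact add_mem iha ihb
  | smul c a _ iha => rw [smul_mul_assoc]; exact Submodule.smul_mem _ _ iha

lemma bmon_one : bmon q s t φ 0 (0,0,0) = 1 := by
  simp [bmon, zpow2]

lemma bmon_csg : bmon q s t φ 0 (0,1,0) = bcs := by
  simp [bmon, zpow2]

lemma bmon_ctg : bmon q s t φ 0 (0,0,1) = bct := by
  simp [bmon, zpow2]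

lemma bmon_kg : bmon q s t φ 0 (1,0,0) = bk := by
  simp [bmon, zpow2]

lemma bmon_kig : bmon q s t φ 0 (-1,0,0) = bki := by
  simp [bmon, zpow2]

lemma bmon_fg : bmon q s t φ 1 (0,0,0) = bf := by
  simp [bmon, zpow2]

lemma bmon_eg : bmon q s t φ (-1) (0,0,0) = be := by
  simp [bmon, zpow2]

/-- The span of all monomials. -/
def SpanAll : Submodule F (BAlg q s t φ) := Submodule.span F (Set.range (BM q s t φ))

lemma Dn_le_SpanAll (n : ℤ) : Dn q s t φ n ≤ SpanAll q s t φ :=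
  Submodule.span_le.mpr (by rintro _ ⟨p, rfl⟩; exact Submodule.subset_span ⟨(n, p), rfl⟩)

lemma SpanAll_mul {x y : BAlg q s t φ} (hq0 : q ≠ 0) (hx : x ∈ SpanAll q s t φ)
    (hy : y ∈ SpanAll q s t φ) : x * y ∈ SpanAll q s t φ := by
  induction hx using Submodule.span_induction with
  | mem a ha =>
    obtain ⟨p, rfl⟩ := ha
    induction hy using Submodule.span_induction with
    | mem b hb =>
      obtain ⟨p', rfl⟩ := hb
      exact Dn_le_SpanAll q s t φ (p.1 + p'.1)
        (mon_mulD q s t φ hq0 p.1 p.2 _ (Submodule.subset_span ⟨p'.2, rfl⟩))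
    | zero => rw [mul_zero]; exact zero_mem _
    | add a' b' _ _ iha ihb => rw [mul_add]; exact add_mem iha ihb
    | smul c a' _ iha => rw [mul_smul_comm]; exact Submodule.smul_mem _ _ iha
  | zero => rw [zero_mul]; exact zero_mem _
  | add a b _ _ iha ihb => rw [add_mul]; exact add_mem iha ihb
  | smul c a _ iha => rw [smul_mul_assoc]; exact Submodule.smul_mem _ _ iha

lemma SpanAll_top (hq0 : q ≠ 0) : ∀ x : BAlg q s t φ, x ∈ SpanAll q s t φ := by
  intro x
  obtain ⟨y, rfl⟩ := RingQuot.mkAlgHom_surjective F (BRel q s t φ) x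
  induction y with
  | grade0 r =>
    rw [AlgHom.commutes, Algebra.algebraMap_eq_smul_one]
    refine Submodule.smul_mem _ _ (Submodule.subset_span ⟨(0,(0,0,0)), ?_⟩)
    exact bmon_one q s t φ
  | grade1 g =>
    rcases g with _ | _ | _ | _ | _ | _
    · exact Submodule.subset_span ⟨(0,(0,1,0)), bmon_csg q s t φ⟩
    · exact Submodule.subset_span ⟨(0,(0,0,1)), bmon_ctg q s t φ⟩
    · exact Submodule.subset_span ⟨(-1,(0,0,0)), bmon_eg q s t φ⟩
    · exact Submodule.subset_span ⟨(1,(0,0,0)), bmon_fg q s t φ⟩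
    · exact Submodule.subset_span ⟨(0,(1,0,0)), bmon_kg q s t φ⟩
    · exact Submodule.subset_span ⟨(0,(-1,0,0)), bmon_kig q s t φ⟩
  | mul a b iha ihb =>
    rw [map_mul]
    exact SpanAll_mul q s t φ hq0 iha ihb
  | add a b iha ihb =>
    rw [map_add]
    exact add_mem iha ihb

end S15
namespace S15

variable {F : Type*} [Field F] (q : F) (s t : ℤ) (φ : LaurentPolynomial F)

/-- The PBW basis of `B_q(s,t,φ)`. -/
def basB (hq0 : q ≠ 0) : Module.Basis Idx F (BAlg q s t φ) :=
  Module.Basis.mk (BM_indep q s t φ hq0)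
    (show ⊤ ≤ Submodule.span F (Set.range (BM q s t φ)) from fun x _ => SpanAll_top q s t φ hq0 x)

lemma range_bmon (n : ℤ) :
    Set.range (bmon q s t φ n) = BM q s t φ '' {p : Idx | p.1 = n} := by
  ext x
  constructor
  · rintro ⟨p', rfl⟩
    exact ⟨(n, p'), rfl, rfl⟩
  · rintro ⟨⟨m, p'⟩, hm, rfl⟩
    have : m = n := hm
    subst this
    exact ⟨p', rfl⟩

lemma Dn_eq (hq0 : q ≠ 0) (n : ℤ) :
    Dn q s t φ n = Submodule.span F (⇑(basB q s t φ hq0) '' {p : Idx | p.1 = n}) := by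
  unfold basB
  rw [Module.Basis.coe_mk]
  unfold Dn
  rw [range_bmon]

lemma Dn_indep (hq0 : q ≠ 0) : iSupIndep (Dn q s t φ) := by
  intro n
  rw [Submodule.disjoint_def]
  intro x hx1 hx2
  set bas := basB q s t φ hq0 with hbas
  have hsup : (⨆ (m) (_ : m ≠ n), Dn q s t φ m)
      ≤ Submodule.span F (⇑bas '' {p : Idx | p.1 ≠ n}) := by
    refine iSup₂_le fun m hm => ?_
    rw [Dn_eq q s t φ hq0 m]
    exact Submodule.span_mono (Set.image_mono (fun p hp => by
      simp only [Set.mem_setOf_eq] at hp ⊢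
      rw [hp]
      exact hm))
  have h1 : ↑(bas.repr x).support ⊆ {p : Idx | p.1 = n} :=
    (Module.Basis.mem_span_image bas).mp (by rw [← Dn_eq q s t φ hq0 n]; exact hx1)
  have h2 : ↑(bas.repr x).support ⊆ {p : Idx | p.1 ≠ n} :=
    (Module.Basis.mem_span_image bas).mp (hsup hx2)
  have hz : bas.repr x = 0 := by
    ext p
    by_contra hp
    have hmem : p ∈ (bas.repr x).support := Finsupp.mem_support_iff.mpr (by
      intro hc
      exact hp (by rw [hc]; rfl))
    exact h2 hmem (h1 hmem)
  have := congrArg bas.repr.symm hz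
  rwa [bas.repr.symm_apply_apply, map_zero] at this

lemma Dn_top (hq0 : q ≠ 0) : (⨆ n, Dn q s t φ n) = ⊤ := by
  refine top_unique fun x _ => ?_
  have hle : SpanAll q s t φ ≤ ⨆ n, Dn q s t φ n := by
    refine Submodule.span_le.mpr ?_
    rintro _ ⟨p, rfl⟩
    exact le_iSup (Dn q s t φ) p.1 (Submodule.subset_span ⟨p.2, rfl⟩)
  exact hle (SpanAll_top q s t φ hq0 x)

end S15

theorem stmt15 {F : Type*} [Field F] (q : F) (hq0 : q ≠ 0)
    (hq : ∀ n : ℕ, 0 < n → q ^ n ≠ 1) (s t : ℤ) (hst : s ≠ t)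
    (φ : LaurentPolynomial F) (hφ : φ.coeff s = 0 ∧ φ.coeff t = 0) :
    ∃ Bn : ℤ → Submodule F (BAlg q s t φ),
      DirectSum.IsInternal Bn ∧
      (∀ m n : ℤ, ∀ x ∈ Bn m, ∀ y ∈ Bn n, x * y ∈ Bn (m + n)) ∧
      bgen q s t φ BGen.cs ∈ Bn 0 ∧ bgen q s t φ BGen.ct ∈ Bn 0 ∧
      bgen q s t φ BGen.k ∈ Bn 0 ∧ bgen q s t φ BGen.kinv ∈ Bn 0 ∧
      bgen q s t φ BGen.f ∈ Bn 1 ∧ bgen q s t φ BGen.e ∈ Bn (-1) ∧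
      ∀ n : ℤ,
        LinearIndependent F (fun p : ℤ × ℕ × ℕ =>
          zpow2 (bgen q s t φ BGen.f) (bgen q s t φ BGen.e) n
            * zpow2 (bgen q s t φ BGen.k) (bgen q s t φ BGen.kinv) p.1
            * bgen q s t φ BGen.cs ^ p.2.1 * bgen q s t φ BGen.ct ^ p.2.2) ∧
        Bn n = Submodule.span F (Set.range (fun p : ℤ × ℕ × ℕ =>
          zpow2 (bgen q s t φ BGen.f) (bgen q s t φ BGen.e) n
            * zpow2 (bgen q s t φ BGen.k) (bgen q s t φ BGen.kinv) p.1
            * bgen q s t φ BGen.cs ^ p.2.1 * bgen q s t φ BGen.ct ^ p.2.2)) := by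
  classical
  refine ⟨S15.Dn q s t φ, ?_, ?_, ?_, ?_, ?_, ?_, ?_, ?_, ?_⟩
  · exact DirectSum.isInternal_submodule_of_iSupIndep_of_iSup_eq_top
      (S15.Dn_indep q s t φ hq0) (S15.Dn_top q s t φ hq0)
  · intro m n x hx y hy
    exact S15.D_mulD q s t φ hq0 hx hy
  · exact Submodule.subset_span ⟨(0,1,0), S15.bmon_csg q s t φ⟩
  · exact Submodule.subset_span ⟨(0,0,1), S15.bmon_ctg q s t φ⟩
  · exact Submodule.subset_span ⟨(1,0,0), S15.bmon_kg q s t φ⟩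
  · exact Submodule.subset_span ⟨(-1,0,0), S15.bmon_kig q s t φ⟩
  · exact Submodule.subset_span ⟨(0,0,0), S15.bmon_fg q s t φ⟩
  · exact Submodule.subset_span ⟨(0,0,0), S15.bmon_eg q s t φ⟩
  · intro n
    refine ⟨?_, rfl⟩
    exact (S15.BM_indep q s t φ hq0).comp (fun p => (n, p))
      (fun a b hab => (Prod.ext_iff.mp hab).2)

end
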